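/- Let N ≥ 1, τ>0, and let f : [0,∞) → [0,∞) be a C² function with f(0)=0, f(1)=1, f'(0)>1, f'(1)<1, f'(u)>0 for all u∈(0,1), and f(u)>u for all u∈(0,1). Let c*>0 be the minimal monostable wave speed, and let φ : [−τ,0]×ℝ^N → [0,1] satisfy the Assumption on the initial datum, with Ω₀ := {x : w₀(x)>0}. For c>0 and t ≥ 0 set Ω_t^c := Ω₀ ∪ {x∈ℝ^N : dist(x,Ω₀) < ct}. Then for every c > c*, every t₀>0 and every ρ>0 there exists ε₀∈(0,1) such that for all ε∈(0,ε₀): every solution u^ε of the scaled delayed reaction–diffusion equation with initial datum φ satisfies u^ε(t,x) ≤ ρ for all t ≥ t₀ and all x ∈ ℝ^N \\ Ω_t^c. -/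

import Mathlib

set_option maxHeartbeats 1000000


open Set Filter Metric
open scoped Topology BigOperators

/-- The Laplacian of a function on `ℝ^N`, as a sum of pure second derivatives. -/
noncomputable def lap {N : ℕ} (g : EuclideanSpace ℝ (Fin N) → ℝ)
    (x : EuclideanSpace ℝ (Fin N)) : ℝ :=
  ∑ i : Fin N, iteratedFDeriv ℝ 2 g x ![EuclideanSpace.single i 1, EuclideanSpace.single i 1]
/-- `f : [0,∞) → [0,∞)` is a monostable nonlinearity of class `C²`:
`f(0)=0`, `f(1)=1`, `f'(0)>1`, `f'(1)<1`, `f'>0` on `(0,1)` and `f(u)>u` on `(0,1)`. -/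
structure Monostable (f : ℝ → ℝ) : Prop where
  smooth : ContDiffOn ℝ 2 f (Ici 0)
  nonneg : ∀ u, 0 ≤ u → 0 ≤ f u
  map0 : f 0 = 0
  map1 : f 1 = 1
  slope0 : 1 < derivWithin f (Ici 0) 0
  slope1 : derivWithin f (Ici 0) 1 < 1
  derivPos : ∀ u ∈ Ioo (0:ℝ) 1, 0 < derivWithin f (Ici 0) u
  aboveId : ∀ u ∈ Ioo (0:ℝ) 1, u < f u
/-- A monostable delayed travelling wave of speed `c` for the nonlinearity `f`:
a `C²` profile with values in `[0,1]`, `U'' + cU' + f(U(·+cτ)) − U = 0`,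
`U(−∞)=1`, `U(+∞)=0`. -/
def MonoWave (f : ℝ → ℝ) (τ : ℝ) (U : ℝ → ℝ) (c : ℝ) : Prop :=
  ContDiff ℝ 2 U ∧ (∀ z, U z ∈ Icc (0:ℝ) 1) ∧
    (∀ z, deriv (deriv U) z + c * deriv U z + f (U (z + c * τ)) - U z = 0) ∧
    Tendsto U atBot (𝓝 1) ∧ Tendsto U atTop (𝓝 0)
/-- `u` is a solution of the scaled delayed reaction–diffusion equation
`∂_t u = εΔu + (1/ε)[f(u(t−ετ,x)) − u(t,x)]` on `(0,∞)×ℝ^N`, with values in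
`[0,1]`, continuous on `[−ετ,∞)×ℝ^N`, equal to `φ(·/ε,·)` on `[−ετ,0]×ℝ^N`,
`C¹` in `t` and `C²` in `x` for `t > 0`. -/
def IsRDSol {N : ℕ} (f : ℝ → ℝ) (τ ε : ℝ)
    (φ u : ℝ → EuclideanSpace ℝ (Fin N) → ℝ) : Prop :=
  ContinuousOn (fun p : ℝ × EuclideanSpace ℝ (Fin N) => u p.1 p.2)
      (Ici (-(ε * τ)) ×ˢ univ) ∧
    (∀ t ≥ -(ε * τ), ∀ x, u t x ∈ Icc (0:ℝ) 1) ∧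
    (∀ θ ∈ Icc (-(ε * τ)) 0, ∀ x, u θ x = φ (θ / ε) x) ∧
    (∀ t > (0:ℝ), (∀ x, DifferentiableAt ℝ (fun s => u s x) t) ∧ ContDiff ℝ 2 (u t)) ∧
    (∀ t > (0:ℝ), ∀ x, deriv (fun s => u s x) t
      = ε * lap (u t) x + (1 / ε) * (f (u (t - ε * τ) x) - u t x))


lemma iFD_two_comb {N : ℕ} {F G : EuclideanSpace ℝ (Fin N) → ℝ} (A : ℝ)
    (hF : ContDiff ℝ 2 F) (hG : ContDiff ℝ 2 G) (x : EuclideanSpace ℝ (Fin N))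
    (m : Fin 2 → EuclideanSpace ℝ (Fin N)) :
    iteratedFDeriv ℝ 2 (fun y => A * (F y - G y)) x m
      = A * (iteratedFDeriv ℝ 2 F x m - iteratedFDeriv ℝ 2 G x m) := by
  have h0 : (fun y => A * (F y - G y))
      = A • (fun y : EuclideanSpace ℝ (Fin N) => F y + -(G y)) := by
    funext y
    show A * (F y - G y) = A • (F y + -(G y))
    rw [smul_eq_mul]
    ring
  have h1 : iteratedFDeriv ℝ 2
        (A • (fun y : EuclideanSpace ℝ (Fin N) => F y + -(G y))) x
      = A • iteratedFDeriv ℝ 2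
        (fun y : EuclideanSpace ℝ (Fin N) => F y + -(G y)) x :=
    iteratedFDeriv_const_smul_apply (hF.add hG.neg).contDiffAt
  have h3 : iteratedFDeriv ℝ 2
        (fun y : EuclideanSpace ℝ (Fin N) => F y + -(G y)) x
      = iteratedFDeriv ℝ 2 F x
        + iteratedFDeriv ℝ 2 (fun y : EuclideanSpace ℝ (Fin N) => -(G y)) x :=
    iteratedFDeriv_add_apply' hF.contDiffAt hG.neg.contDiffAt
  have h4 : iteratedFDeriv ℝ 2 (fun y : EuclideanSpace ℝ (Fin N) => -(G y)) x
      = -iteratedFDeriv ℝ 2 G x := iteratedFDeriv_neg_apply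
  rw [h0, h1, h3, h4]
  simp [smul_eq_mul]
  ring

lemma lap_comb {N : ℕ} {F G : EuclideanSpace ℝ (Fin N) → ℝ} (A : ℝ)
    (hF : ContDiff ℝ 2 F) (hG : ContDiff ℝ 2 G) (x : EuclideanSpace ℝ (Fin N)) :
    lap (fun y => A * (F y - G y)) x = A * (lap F x - lap G x) := by
  unfold lap
  rw [Finset.sum_congr rfl fun i _ => iFD_two_comb A hF hG x _]
  rw [← Finset.sum_sub_distrib, ← Finset.mul_sum]

section Slice
variable {E F : Type*} [NormedAddCommGroup E] [NormedSpace ℝ E]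
  [NormedAddCommGroup F] [NormedSpace ℝ F]

lemma path_hasDerivAt (x v : E) (s₀ : ℝ) :
    HasDerivAt (fun s : ℝ => x + s • v) v s₀ := by
  simpa using ((hasDerivAt_id s₀).smul_const v).const_add x

lemma slice_hasDerivAt {g : E → F} (hg : Differentiable ℝ g) (x v : E) (s₀ : ℝ) :
    HasDerivAt (fun s : ℝ => g (x + s • v)) (fderiv ℝ g (x + s₀ • v) v) s₀ :=
  (hg (x + s₀ • v)).hasFDerivAt.comp_hasDerivAt s₀ (path_hasDerivAt x v s₀)

lemma slice2_hasDerivAt {g : E → F} (hg : ContDiff ℝ 2 g) (x v : E) (s₀ : ℝ) :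
    HasDerivAt (fun s : ℝ => fderiv ℝ g (x + s • v) v)
      (fderiv ℝ (fderiv ℝ g) (x + s₀ • v) v v) s₀ := by
  have hF : Differentiable ℝ (fderiv ℝ g) :=
    (hg.fderiv_right (m := 1) (by norm_num)).differentiable one_ne_zero
  have h1 : HasDerivAt (fun s : ℝ => fderiv ℝ g (x + s • v))
      (fderiv ℝ (fderiv ℝ g) (x + s₀ • v) v) s₀ := slice_hasDerivAt hF x v s₀
  simpa using h1.clm_apply (hasDerivAt_const s₀ v)

lemma deriv_slice_eq {g : E → F} (hg : Differentiable ℝ g) (x v : E) :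
    deriv (fun s : ℝ => g (x + s • v)) = fun s : ℝ => fderiv ℝ g (x + s • v) v :=
  funext fun s => (slice_hasDerivAt hg x v s).deriv

lemma dd_slice_eq {g : E → F} (hg : ContDiff ℝ 2 g) (x v : E) :
    deriv (deriv (fun s : ℝ => g (x + s • v))) 0
      = fderiv ℝ (fderiv ℝ g) x v v := by
  rw [deriv_slice_eq (hg.differentiable (by norm_num)) x v]
  have := (slice2_hasDerivAt hg x v 0).deriv
  simpa using this

lemma iFD_two_eq_dd_slice {g : E → F} (hg : ContDiff ℝ 2 g) (x v : E) :
    iteratedFDeriv ℝ 2 g x ![v, v]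
      = deriv (deriv (fun s : ℝ => g (x + s • v))) 0 := by
  rw [iteratedFDeriv_two_apply, dd_slice_eq hg x v]
  simp

lemma lap_eq_sum_dd {N : ℕ} {g : EuclideanSpace ℝ (Fin N) → ℝ} (hg : ContDiff ℝ 2 g)
    (x : EuclideanSpace ℝ (Fin N)) :
    lap g x = ∑ i : Fin N,
      deriv (deriv (fun s : ℝ => g (x + s • EuclideanSpace.single i 1))) 0 := by
  unfold lap
  exact Finset.sum_congr rfl fun i _ => iFD_two_eq_dd_slice hg x _

end Slice

lemma secondDeriv_nonneg_of_isLocalMin {h : ℝ → ℝ} (hC : ContDiff ℝ 2 h)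
    (hmin : IsLocalMin h 0) : 0 ≤ deriv (deriv h) 0 := by
  by_contra hneg
  push_neg at hneg
  set a := deriv (deriv h) 0 with ha
  have h0 : deriv h 0 = 0 := hmin.deriv_eq_zero
  have hdiff : Differentiable ℝ h := hC.differentiable (by norm_num)
  have hd1 : ContDiff ℝ 1 (deriv h) := by
    have : (2 : WithTop ℕ∞) = 1 + 1 := by norm_num
    rw [this] at hC
    exact (contDiff_succ_iff_deriv.mp hC).2.2
  have hder : HasDerivAt (deriv h) a 0 :=
    ((hd1.differentiable one_ne_zero) 0).hasDerivAt
  have hslope := hasDerivAt_iff_tendsto_slope.mp hder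
  have hslope' : Tendsto (slope (deriv h) 0) (𝓝[>] 0) (𝓝 a) :=
    hslope.mono_left (nhdsWithin_mono 0 (by intro s hs; exact ne_of_gt hs))
  have hev : ∀ᶠ s in 𝓝[>] (0:ℝ), slope (deriv h) 0 s < a / 2 :=
    hslope' (Iio_mem_nhds (by linarith))
  rw [eventually_nhdsWithin_iff] at hev
  obtain ⟨s₀, hs₀pos, hs₀⟩ := Metric.eventually_nhds_iff_ball.mp hev
  have hdn : ∀ s ∈ Ioo (0:ℝ) s₀, deriv h s < 0 := by
    intro s hs
    have hsball : s ∈ Metric.ball (0:ℝ) s₀ := by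
      simp [abs_of_pos hs.1, hs.2, Real.dist_eq]
    have := hs₀ s hsball hs.1
    rw [slope_def_field] at this
    have hdiv : (deriv h s - deriv h 0) / (s - 0) < a / 2 := this
    rw [h0, sub_zero, sub_zero] at hdiv
    have : deriv h s < a / 2 * s := by
      have := (div_lt_iff₀ hs.1).mp hdiv
      linarith
    nlinarith [hs.1]
  have hanti : StrictAntiOn h (Icc 0 (s₀/2)) := by
    apply strictAntiOn_of_deriv_neg (convex_Icc _ _) (hdiff.continuous.continuousOn)
    intro s hs
    rw [interior_Icc] at hs
    exact hdn s ⟨hs.1, by linarith [hs.2]⟩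
  have hminev : ∀ᶠ s in 𝓝[>] (0:ℝ), h 0 ≤ h s :=
    (hmin.filter_mono nhdsWithin_le_nhds)
  have hsmall : ∀ᶠ s in 𝓝[>] (0:ℝ), s < s₀/2 :=
    eventually_nhdsWithin_of_eventually_nhds
      (Filter.Tendsto.eventually_lt_const (by linarith) tendsto_id)
  obtain ⟨s₁, hs₁min, hs₁lt, hs₁pos⟩ := (hminev.and (hsmall.and self_mem_nhdsWithin)).exists
  have : h s₁ < h 0 := hanti ⟨le_rfl, by linarith⟩ ⟨le_of_lt hs₁pos, le_of_lt hs₁lt⟩ hs₁pos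
  linarith

lemma deriv_nonpos_of_isMinOn_right {ϕ : ℝ → ℝ} {T₀ T : ℝ} (hlt : T₀ < T)
    (hdiff : DifferentiableAt ℝ ϕ T) (hmin : ∀ t ∈ Icc T₀ T, ϕ T ≤ ϕ t) :
    deriv ϕ T ≤ 0 := by
  have hder := hdiff.hasDerivAt
  have hslope := hasDerivAt_iff_tendsto_slope.mp hder
  have hslope' : Tendsto (slope ϕ T) (𝓝[<] T) (𝓝 (deriv ϕ T)) :=
    hslope.mono_left (nhdsWithin_mono T (by intro s hs; exact ne_of_lt hs))
  refine le_of_tendsto hslope' ?_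
  filter_upwards [Ioo_mem_nhdsLT_of_mem (show T ∈ Ioc T₀ T from ⟨hlt, le_rfl⟩)] with t ht
  rw [slope_def_field]
  have h1 : ϕ T ≤ ϕ t := hmin t ⟨le_of_lt ht.1, le_of_lt ht.2⟩
  have h2 : t - T < 0 := by linarith [ht.2]
  exact div_nonpos_of_nonneg_of_nonpos (by linarith) (by linarith)

/-- Minimum principle for supersolutions of the heat equation on a time strip. -/
lemma min_principle {N : ℕ} {ε T₀ T₁ C : ℝ} (hε : 0 < ε) (hT : T₀ < T₁)
    {H : ℝ → EuclideanSpace ℝ (Fin N) → ℝ}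
    (hcont : ContinuousOn (fun p : ℝ × EuclideanSpace ℝ (Fin N) => H p.1 p.2)
      (Icc T₀ T₁ ×ˢ univ))
    (hbdd : ∀ t ∈ Icc T₀ T₁, ∀ x, -C ≤ H t x)
    (hreg : ∀ t ∈ Ioc T₀ T₁,
      (∀ x, DifferentiableAt ℝ (fun s => H s x) t) ∧ ContDiff ℝ 2 (H t))
    (hineq : ∀ t ∈ Ioc T₀ T₁, ∀ x, ε * lap (H t) x ≤ deriv (fun s => H s x) t)
    (hinit : ∀ x, 0 ≤ H T₀ x) :
    ∀ t ∈ Icc T₀ T₁, ∀ x, 0 ≤ H t x := by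
  by_contra hcon
  push_neg at hcon
  obtain ⟨th, hth, xh, hxh⟩ := hcon
  set d : ℝ := -H th xh with hd
  have hdpos : 0 < d := by simp [hd]; linarith
  have hCd : d ≤ C := by have := hbdd th hth xh; linarith
  have hCpos : 0 < C := lt_of_lt_of_le hdpos hCd
  set η : ℝ := d / (2*(T₁ - T₀) + 2) with hη
  have hηpos : 0 < η := div_pos hdpos (by linarith)
  set β : ℝ := η / (2*N*ε + 1) with hβ
  have hNnn : (0:ℝ) ≤ 2*N*ε := by positivity
  have hβpos : 0 < β := div_pos hηpos (by linarith)
  set R : ℝ := Real.sqrt ((C + d + 1)/β) with hR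
  have hR2 : β * R^2 = C + d + 1 := by
    rw [hR, Real.sq_sqrt (by positivity)]
    field_simp
  -- the penalized function
  set S : EuclideanSpace ℝ (Fin N) → ℝ := fun y => ‖y - xh‖^2 with hS
  set Z : ℝ × EuclideanSpace ℝ (Fin N) → ℝ :=
    fun p => H p.1 p.2 + β * S p.2 + η * (p.1 - T₀) with hZ
  have hScont : Continuous S := by
    have : Continuous fun y : EuclideanSpace ℝ (Fin N) => y - xh :=
      continuous_id.sub continuous_const
    exact (this.norm.pow 2)
  set K : Set (ℝ × EuclideanSpace ℝ (Fin N)) := Icc T₀ T₁ ×ˢ closedBall xh R with hK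
  have hKsub : K ⊆ Icc T₀ T₁ ×ˢ univ := prod_mono_right (subset_univ _)
  have hKc : IsCompact K := isCompact_Icc.prod (isCompact_closedBall _ _)
  have hKne : K.Nonempty := ⟨(th, xh), hth, mem_closedBall_self (Real.sqrt_nonneg _)⟩
  have hZcont : ContinuousOn Z K := by
    apply ContinuousOn.add
    apply ContinuousOn.add (hcont.mono hKsub)
    · exact (continuous_const.mul (hScont.comp continuous_snd)).continuousOn
    · exact (continuous_const.mul ((continuous_fst).sub continuous_const)).continuousOn
  obtain ⟨⟨ts, xs⟩, hmemK, hminK⟩ := hKc.exists_isMinOn hKne hZcont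
  have hminK' : ∀ p ∈ K, Z (ts, xs) ≤ Z p := hminK
  have hZneg : Z (ts, xs) < 0 := by
    have h1 : Z (th, xh) = -d + η * (th - T₀) := by
      show H th xh + β * ‖xh - xh‖^2 + η * (th - T₀) = -d + η * (th - T₀)
      rw [sub_self, norm_zero]
      simp [hd]
    have h2 : η * (th - T₀) ≤ d / 2 := by
      have h3 : th - T₀ ≤ T₁ - T₀ := by linarith [hth.2]
      have h4 : η * (th - T₀) ≤ η * (T₁ - T₀) :=
        mul_le_mul_of_nonneg_left h3 (le_of_lt hηpos)
      have h5 : η * (T₁ - T₀) ≤ d / 2 := by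
        rw [hη]
        rw [div_mul_eq_mul_div, div_le_div_iff₀ (by linarith) (by norm_num)]
        nlinarith [hdpos, hT]
      linarith
    have := hminK' (th, xh) ⟨hth, mem_closedBall_self (Real.sqrt_nonneg _)⟩
    rw [h1] at this
    linarith
  have hts01 : ts ∈ Icc T₀ T₁ := hmemK.1
  -- x* is in the open ball
  have hxs_lt : ‖xs - xh‖ < R := by
    by_contra hcontra
    push_neg at hcontra
    have h1 : -C ≤ H ts xs := hbdd ts hts01 xs
    have h2 : β * R^2 ≤ β * S xs := by
      have hRnn : 0 ≤ R := Real.sqrt_nonneg _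
      have hx2 : R^2 ≤ ‖xs - xh‖^2 := by nlinarith [hcontra]
      have hSxs : S xs = ‖xs - xh‖^2 := rfl
      rw [hSxs]
      exact mul_le_mul_of_nonneg_left hx2 hβpos.le
    have h3 : 0 ≤ η * (ts - T₀) := mul_nonneg (le_of_lt hηpos) (by linarith [hts01.1])
    have : 0 ≤ Z (ts, xs) := by
      have : Z (ts, xs) = H ts xs + β * S xs + η * (ts - T₀) := rfl
      rw [this]
      nlinarith [hR2]
    linarith
  -- global spatial minimality
  have hglob : ∀ y, Z (ts, xs) ≤ Z (ts, y) := by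
    intro y
    by_cases hy : y ∈ closedBall xh R
    · exact hminK' (ts, y) ⟨hts01, hy⟩
    · have hy' : R < ‖y - xh‖ := by
        rw [mem_closedBall, dist_eq_norm] at hy
        linarith [not_le.mp hy]
      have h1 : -C ≤ H ts y := hbdd ts hts01 y
      have h2 : β * R^2 ≤ β * S y := by
        have hRnn : 0 ≤ R := Real.sqrt_nonneg _
        have hx2 : R^2 ≤ ‖y - xh‖^2 := by nlinarith [hy']
        have hSy : S y = ‖y - xh‖^2 := rfl
        rw [hSy]
        exact mul_le_mul_of_nonneg_left hx2 hβpos.le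
      have h3 : 0 ≤ η * (ts - T₀) := mul_nonneg (le_of_lt hηpos) (by linarith [hts01.1])
      have : 0 ≤ Z (ts, y) := by
        have : Z (ts, y) = H ts y + β * S y + η * (ts - T₀) := rfl
        rw [this]; nlinarith [hR2]
      linarith
  -- t* > T₀
  have hts_gt : T₀ < ts := by
    rcases lt_or_eq_of_le hts01.1 with h | h
    · exact h
    · exfalso
      have : Z (ts, xs) = H T₀ xs + β * S xs := by
        rw [hZ, ← h]; simp
      have h1 : 0 ≤ H T₀ xs := hinit xs
      have h2 : 0 ≤ β * S xs := mul_nonneg (le_of_lt hβpos) (by rw [hS]; positivity)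
      linarith [hZneg, this ▸ (by linarith : (0:ℝ) ≤ H T₀ xs + β * S xs)]
  have htsIoc : ts ∈ Ioc T₀ T₁ := ⟨hts_gt, hts01.2⟩
  obtain ⟨hdiff_t, hC2⟩ := hreg ts htsIoc
  -- time derivative estimate
  have htime : deriv (fun s => H s xs) ts ≤ -η := by
    have hϕdiff : DifferentiableAt ℝ (fun t => Z (t, xs)) ts := by
      have : (fun t => Z (t, xs))
          = fun t => H t xs + β * S xs + η * (t - T₀) := rfl
      rw [this]
      exact ((hdiff_t xs).add (differentiableAt_const _)).add (by fun_prop)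
    have hϕmin : ∀ t ∈ Icc T₀ ts, (fun t => Z (t, xs)) ts ≤ (fun t => Z (t, xs)) t := by
      intro t ht
      exact hminK' (t, xs) ⟨⟨ht.1, le_trans ht.2 hts01.2⟩,
        by rw [mem_closedBall, dist_eq_norm]; linarith [hxs_lt]⟩
    have hder := deriv_nonpos_of_isMinOn_right hts_gt hϕdiff hϕmin
    have heq : deriv (fun t => Z (t, xs)) ts = deriv (fun s => H s xs) ts + η := by
      have h1 : (fun t => Z (t, xs))
          = fun t => (fun s => H s xs) t + (β * S xs + η * (t - T₀)) := by
        funext t; simp [hZ]; ring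
      rw [h1]
      rw [deriv_fun_add (hdiff_t xs) (by fun_prop)]
      congr 1
      have : HasDerivAt (fun t : ℝ => β * S xs + η * (t - T₀)) η ts := by
        simpa using (((hasDerivAt_id ts).sub_const T₀).const_mul η).const_add (β * S xs)
      exact this.deriv
    linarith [heq ▸ hder]
  -- space estimate : lap (H ts) xs ≥ -2βN
  have hspace : -(2 * β * N) ≤ lap (H ts) xs := by
    have hg : ∀ i : Fin N,
        -(2*β) ≤ deriv (deriv (fun s : ℝ =>
          H ts (xs + s • EuclideanSpace.single i 1))) 0 := by
      intro i
      set v : EuclideanSpace ℝ (Fin N) := EuclideanSpace.single i 1 with hv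
      have hvnorm : ‖v‖ = 1 := by simp [hv]
      -- the slice of the full penalized spatial function
      set q : ℝ → ℝ := fun s => β * S (xs + s • v) with hq
      have hqform : ∀ s : ℝ, q s
          = β * (‖xs - xh‖^2 + 2 * (inner ℝ (xs - xh) v : ℝ) * s + s^2) := by
        intro s
        show β * ‖xs + s • v - xh‖^2 = _
        have h1 : xs + s • v - xh = (xs - xh) + s • v := by abel
        rw [h1, norm_add_sq_real, real_inner_smul_right, norm_smul]
        rw [hvnorm]
        simp only [Real.norm_eq_abs, mul_one]
        rw [sq_abs]
        ring
      set b : ℝ := 2 * (inner ℝ (xs - xh) v : ℝ) with hb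
      have hqd : ∀ s : ℝ, HasDerivAt q (β * (b + 2*s)) s := by
        intro s
        have h1 : HasDerivAt (fun s : ℝ =>
            β * (‖xs - xh‖^2 + b * s + s^2)) (β * (b + 2*s)) s := by
          have h2 : HasDerivAt (fun s : ℝ => ‖xs - xh‖^2 + b * s + s^2) (b + 2*s) s := by
            have hb' : HasDerivAt (fun s : ℝ => b * s) b s := by
              simpa using (hasDerivAt_id s).const_mul b
            have hsq : HasDerivAt (fun s : ℝ => s^2) (2*s) s := by
              simpa using hasDerivAt_pow 2 s
            have := (hb'.const_add (‖xs - xh‖^2)).add hsq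
            exact this
          exact h2.const_mul β
        have : q = fun s : ℝ => β * (‖xs - xh‖^2 + b * s + s^2) := by
          funext s; rw [hqform s]
        rw [this]
        exact h1
      -- the function h := slice of H ts plus q
      set hsl : ℝ → ℝ := fun s => H ts (xs + s • v) with hhsl
      have hslC2 : ContDiff ℝ 2 hsl := by
        apply hC2.comp
        exact contDiff_const.add (contDiff_id.smul contDiff_const)
      have hqC2 : ContDiff ℝ 2 q := by
        have : q = fun s : ℝ => β * (‖xs - xh‖^2 + b * s + s^2) := by
          funext s; rw [hqform s]
        rw [this]
        fun_prop
      have hsum : ContDiff ℝ 2 (fun s => hsl s + q s) := hslC2.add hqC2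
      have hmin0 : IsLocalMin (fun s => hsl s + q s) 0 := by
        apply Filter.Eventually.of_forall
        intro s
        show hsl 0 + q 0 ≤ hsl s + q s
        have h1 : hsl s + q s = Z (ts, xs + s • v) - η * (ts - T₀) := by
          show H ts (xs + s • v) + β * S (xs + s • v) = _
          show _ = H ts (xs + s • v) + β * S (xs + s • v) + η * (ts - T₀) - η * (ts - T₀)
          ring
        have h2 : hsl 0 + q 0 = Z (ts, xs) - η * (ts - T₀) := by
          have hz : xs + (0:ℝ) • v = xs := by simp
          show H ts (xs + (0:ℝ) • v) + β * S (xs + (0:ℝ) • v) = _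
          rw [hz]
          show _ = H ts xs + β * S xs + η * (ts - T₀) - η * (ts - T₀)
          ring
        rw [h1, h2]
        linarith [hglob (xs + s • v)]
      have hdd := secondDeriv_nonneg_of_isLocalMin hsum hmin0
      -- decompose the second derivative
      have hsl_diff : Differentiable ℝ hsl := by
        apply (hC2.differentiable (by norm_num)).comp
        exact (differentiable_const _).add (differentiable_id.smul_const _)
      have hderiv_sum : deriv (fun s => hsl s + q s)
          = fun s => deriv hsl s + β * (b + 2*s) := by
        funext s
        rw [deriv_fun_add (hsl_diff s) (hqd s).differentiableAt]
        rw [(hqd s).deriv]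
      have hdd_sum : deriv (deriv (fun s => hsl s + q s)) 0
          = deriv (deriv hsl) 0 + 2*β := by
        rw [hderiv_sum]
        have hd1 : DifferentiableAt ℝ (deriv hsl) 0 := by
          have : ContDiff ℝ 1 (deriv hsl) := by
            have h2 : (2 : WithTop ℕ∞) = 1 + 1 := by norm_num
            rw [h2] at hslC2
            exact (contDiff_succ_iff_deriv.mp hslC2).2.2
          exact (this.differentiable one_ne_zero) 0
        have hd2 : HasDerivAt (fun s : ℝ => β * (b + 2*s)) (2*β) 0 := by
          have : HasDerivAt (fun s : ℝ => b + 2*s) 2 0 := by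
            simpa using ((hasDerivAt_id (0:ℝ)).const_mul 2).const_add b
          simpa [mul_comm] using this.const_mul β
        rw [deriv_fun_add hd1 hd2.differentiableAt, hd2.deriv]
      rw [hdd_sum] at hdd
      linarith
    rw [lap_eq_sum_dd hC2 xs]
    have hsum2 : ∑ _i : Fin N, -(2*β) = -(2*β*N) := by
      rw [Finset.sum_const, Finset.card_univ, Fintype.card_fin, nsmul_eq_mul]
      ring
    rw [← hsum2]
    exact Finset.sum_le_sum fun i _ => hg i
  -- combine
  have hfinal := hineq ts htsIoc xs
  have h2 : ε * (-(2*β*N)) ≤ ε * lap (H ts) xs :=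
    mul_le_mul_of_nonneg_left hspace (le_of_lt hε)
  have h3 : 2*N*ε*β < η := by
    rw [hβ]
    rw [div_mul_eq_mul_div] at *
    have : η * (2*N*ε) < η * (2*N*ε + 1) := by nlinarith [hηpos]
    calc 2*N*ε*(η / (2*N*ε+1)) = η * (2*N*ε) / (2*N*ε+1) := by ring
      _ < η := by
        rw [div_lt_iff₀ (by linarith)]
        nlinarith [hηpos]
  nlinarith [htime, hfinal, h2]

section Wave
variable {N : ℕ}

lemma affine_comp_hasDerivAt {U : ℝ → ℝ} (hU : Differentiable ℝ U) (α ζ s : ℝ) :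
    HasDerivAt (fun s : ℝ => U (ζ + α * s)) (α * deriv U (ζ + α * s)) s := by
  have hpath : HasDerivAt (fun s : ℝ => ζ + α * s) α s := by
    simpa using ((hasDerivAt_id s).const_mul α).const_add ζ
  rw [mul_comm]; exact (hU (ζ + α * s)).hasDerivAt.comp s hpath

lemma dd_affine_comp {U : ℝ → ℝ} (hU : ContDiff ℝ 2 U) (α ζ : ℝ) :
    deriv (deriv (fun s : ℝ => U (ζ + α * s))) 0 = α^2 * deriv (deriv U) ζ := by
  have hUd : Differentiable ℝ U := hU.differentiable (by norm_num)
  have hU1 : ContDiff ℝ 1 (deriv U) := by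
    have h2 : (2 : WithTop ℕ∞) = 1 + 1 := by norm_num
    rw [h2] at hU
    exact (contDiff_succ_iff_deriv.mp hU).2.2
  have h1 : deriv (fun s : ℝ => U (ζ + α * s))
      = fun s : ℝ => α * deriv U (ζ + α * s) :=
    funext fun s => (affine_comp_hasDerivAt hUd α ζ s).deriv
  rw [h1]
  have h2 : HasDerivAt (fun s : ℝ => α * deriv U (ζ + α * s))
      (α * (α * deriv (deriv U) (ζ + α * 0))) 0 :=
    (affine_comp_hasDerivAt (hU1.differentiable one_ne_zero) α ζ 0).const_mul α
  rw [h2.deriv]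
  simp
  ring

lemma planar_contDiff {U : ℝ → ℝ} (hU : ContDiff ℝ 2 U) (ν : EuclideanSpace ℝ (Fin N))
    (b ε : ℝ) :
    ContDiff ℝ 2 (fun y : EuclideanSpace ℝ (Fin N) => U ((inner ℝ ν y - b)/ε)) := by
  apply hU.comp
  exact (((innerSL ℝ ν).contDiff).sub contDiff_const).div_const ε

lemma sum_inner_single_sq (ν : EuclideanSpace ℝ (Fin N)) :
    ∑ i : Fin N, (inner ℝ ν (EuclideanSpace.single i (1:ℝ)) : ℝ)^2 = ‖ν‖^2 := by
  have h1 : ∀ i : Fin N, (inner ℝ ν (EuclideanSpace.single i (1:ℝ)) : ℝ) = ν i := by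
    intro i
    simp [EuclideanSpace.inner_single_right]
  simp_rw [h1]
  rw [← real_inner_self_eq_norm_sq]
  rw [PiLp.inner_apply]
  congr 1
  funext i
  simp [RCLike.inner_apply]

lemma planar_lap {U : ℝ → ℝ} (hU : ContDiff ℝ 2 U) {ν : EuclideanSpace ℝ (Fin N)}
    (hν : ‖ν‖ = 1) (b ε : ℝ) (hε : ε ≠ 0) (x : EuclideanSpace ℝ (Fin N)) :
    lap (fun y : EuclideanSpace ℝ (Fin N) => U ((inner ℝ ν y - b)/ε)) x
      = deriv (deriv U) ((inner ℝ ν x - b)/ε) / ε^2 := by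
  set ζ : ℝ := (inner ℝ ν x - b)/ε with hζ
  rw [lap_eq_sum_dd (planar_contDiff hU ν b ε) x]
  have hslice : ∀ i : Fin N,
      (fun s : ℝ => U ((inner ℝ ν (x + s • EuclideanSpace.single i (1:ℝ)) - b)/ε))
        = fun s : ℝ => U (ζ + ((inner ℝ ν (EuclideanSpace.single i (1:ℝ)) : ℝ)/ε) * s) := by
    intro i
    funext s
    congr 1
    rw [inner_add_right, real_inner_smul_right]
    rw [hζ]; field_simp
    ring
  calc ∑ i : Fin N, deriv (deriv (fun s : ℝ =>
        U ((inner ℝ ν (x + s • EuclideanSpace.single i (1:ℝ)) - b)/ε))) 0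
      = ∑ i : Fin N, ((inner ℝ ν (EuclideanSpace.single i (1:ℝ)) : ℝ)/ε)^2
          * deriv (deriv U) ζ := by
        apply Finset.sum_congr rfl
        intro i _
        rw [hslice i]
        exact dd_affine_comp hU _ ζ
    _ = deriv (deriv U) ζ / ε^2 := by
        rw [← Finset.sum_mul]
        have : ∑ i : Fin N, ((inner ℝ ν (EuclideanSpace.single i (1:ℝ)) : ℝ)/ε)^2
            = 1/ε^2 := by
          simp_rw [div_pow]
          rw [← Finset.sum_div, sum_inner_single_sq, hν]
          norm_num
        rw [this]
        ring

end Wave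

section Exact
variable {N : ℕ}

/-- A planar travelling wave profile is an exact solution of the scaled delayed RD equation. -/
lemma planar_exact_sol {f : ℝ → ℝ} {τ ε cw : ℝ} (hε : 0 < ε) {U : ℝ → ℝ}
    (hU2 : ContDiff ℝ 2 U)
    (hODE : ∀ z, deriv (deriv U) z + cw * deriv U z + f (U (z + cw * τ)) - U z = 0)
    {ν : EuclideanSpace ℝ (Fin N)} (hν : ‖ν‖ = 1) (a : ℝ) (t : ℝ)
    (x : EuclideanSpace ℝ (Fin N)) :
    deriv (fun s => U ((inner ℝ ν x - a - cw*s)/ε)) t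
      = ε * lap (fun y : EuclideanSpace ℝ (Fin N) => U ((inner ℝ ν y - a - cw*t)/ε)) x
        + (1/ε) * (f (U ((inner ℝ ν x - a - cw*(t - ε*τ))/ε))
            - U ((inner ℝ ν x - a - cw*t)/ε)) := by
  set ζ : ℝ := (inner ℝ ν x - a - cw*t)/ε with hζ
  -- time derivative
  have htime : deriv (fun s => U ((inner ℝ ν x - a - cw*s)/ε)) t
      = (-(cw/ε)) * deriv U ζ := by
    have h1 : (fun s => U ((inner ℝ ν x - a - cw*s)/ε))
        = fun s : ℝ => U (((inner ℝ ν x - a)/ε) + (-(cw/ε)) * s) := by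
      funext s; congr 1; field_simp; ring
    rw [h1]
    have h2 := affine_comp_hasDerivAt (hU2.differentiable (by norm_num))
      (-(cw/ε)) ((inner ℝ ν x - a)/ε) t
    rw [h2.deriv]
    congr 2
    rw [hζ]; field_simp
    ring
  -- Laplacian
  have hlap : lap (fun y : EuclideanSpace ℝ (Fin N) => U ((inner ℝ ν y - a - cw*t)/ε)) x
      = deriv (deriv U) ζ / ε^2 := by
    have hfun : (fun y : EuclideanSpace ℝ (Fin N) => U ((inner ℝ ν y - a - cw*t)/ε))
        = fun y : EuclideanSpace ℝ (Fin N) => U ((inner ℝ ν y - (a + cw*t))/ε) := by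
      funext y
      rw [sub_sub]
    rw [hfun, planar_lap hU2 hν (a + cw*t) ε (ne_of_gt hε) x]
    congr 2
    rw [hζ]; ring_nf
  -- delay
  have hdelay : (inner ℝ ν x - a - cw*(t - ε*τ))/ε = ζ + cw * τ := by
    rw [hζ]; field_simp; ring
  rw [htime, hlap, hdelay]
  have hode := hODE ζ
  field_simp
  linear_combination (-1) * hode

end Exact

lemma comparison {N : ℕ} {f : ℝ → ℝ} {τ ε : ℝ} (hε : 0 < ε) (hτ : 0 < τ)
    (hmono : MonotoneOn f (Icc (0:ℝ) 1))
    {φ u W : ℝ → EuclideanSpace ℝ (Fin N) → ℝ}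
    (hu : IsRDSol f τ ε φ u)
    (hWcont : Continuous (fun p : ℝ × EuclideanSpace ℝ (Fin N) => W p.1 p.2))
    (hWrange : ∀ t x, W t x ∈ Icc (0:ℝ) 1)
    (hWdiff : ∀ t x, DifferentiableAt ℝ (fun s => W s x) t)
    (hWC2 : ∀ t : ℝ, ContDiff ℝ 2 (W t))
    (hWsol : ∀ t x, deriv (fun s => W s x) t
      = ε * lap (W t) x + (1/ε) * (f (W (t - ε*τ) x) - W t x))
    (hinit : ∀ θ ∈ Icc (-(ε*τ)) 0, ∀ x, u θ x ≤ W θ x) :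
    ∀ t ≥ -(ε*τ), ∀ x, u t x ≤ W t x := by
  obtain ⟨hucont, hurange, huic, hureg, hupde⟩ := hu
  have hετ : 0 < ε*τ := mul_pos hε hτ
  have key : ∀ k : ℕ, ∀ t ∈ Icc (-(ε*τ)) ((k:ℝ)*(ε*τ)), ∀ x, u t x ≤ W t x := by
    intro k
    induction k with
    | zero =>
      intro t ht x
      exact hinit t (by simpa using ht) x
    | succ k ih =>
      intro t ht x
      by_cases hcase : t ≤ (k:ℝ)*(ε*τ)
      · exact ih t ⟨ht.1, hcase⟩ x
      · push_neg at hcase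
        set T₀ : ℝ := (k:ℝ)*(ε*τ) with hT₀
        set T₁ : ℝ := ((k:ℝ)+1)*(ε*τ) with hT₁
        have hT₀nn : 0 ≤ T₀ := by positivity
        have hT : T₀ < T₁ := by rw [hT₀, hT₁]; nlinarith
        have htT₁ : t ≤ T₁ := by
          have := ht.2; push_cast at this; linarith
        set H : ℝ → EuclideanSpace ℝ (Fin N) → ℝ :=
          fun s y => Real.exp (s/ε) * (W s y - u s y) with hH
        have hsub : Icc T₀ T₁ ×ˢ (univ : Set (EuclideanSpace ℝ (Fin N)))
            ⊆ Ici (-(ε*τ)) ×ˢ univ := by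
          apply Set.prod_mono_left
          intro s hs
          simp only [mem_Ici]
          have := hs.1; simp only [mem_Icc] at hs; linarith [hs.1, hετ]
        have hcont : ContinuousOn
            (fun p : ℝ × EuclideanSpace ℝ (Fin N) => H p.1 p.2)
            (Icc T₀ T₁ ×ˢ univ) := by
          apply ContinuousOn.mul
          · exact (Real.continuous_exp.comp (continuous_fst.div_const ε)).continuousOn
          · exact (hWcont.continuousOn).sub (hucont.mono hsub)
        have hbdd : ∀ s ∈ Icc T₀ T₁, ∀ y, -(Real.exp (T₁/ε)) ≤ H s y := by
          intro s hs y
          have h1 : 0 ≤ W s y := (hWrange s y).1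
          have h2 : u s y ≤ 1 := (hurange s (by linarith [hs.1, hετ]) y).2
          have h3 : Real.exp (s/ε) ≤ Real.exp (T₁/ε) := by
            apply Real.exp_le_exp.mpr
            gcongr
            exact hs.2
          have h4 : 0 < Real.exp (s/ε) := Real.exp_pos _
          have h5 : -1 ≤ W s y - u s y := by linarith
          show -(Real.exp (T₁/ε)) ≤ Real.exp (s/ε) * (W s y - u s y)
          nlinarith
        have hreg : ∀ s ∈ Ioc T₀ T₁,
            (∀ y, DifferentiableAt ℝ (fun r => H r y) s) ∧ ContDiff ℝ 2 (H s) := by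
          intro s hs
          have hs0 : 0 < s := lt_of_le_of_lt hT₀nn hs.1
          constructor
          · intro y
            have hde : DifferentiableAt ℝ (fun r : ℝ => Real.exp (r/ε)) s :=
              (Real.differentiable_exp.comp (differentiable_id.div_const ε)) s
            exact hde.mul ((hWdiff s y).sub ((hureg s hs0).1 y))
          · exact contDiff_const.mul ((hWC2 s).sub (hureg s hs0).2)
        have hineq : ∀ s ∈ Ioc T₀ T₁, ∀ y,
            ε * lap (H s) y ≤ deriv (fun r => H r y) s := by
          intro s hs y
          have hs0 : 0 < s := lt_of_le_of_lt hT₀nn hs.1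
          have hdu : HasDerivAt (fun r => u r y) (deriv (fun r => u r y) s) s :=
            ((hureg s hs0).1 y).hasDerivAt
          have hdW : HasDerivAt (fun r => W r y) (deriv (fun r => W r y) s) s :=
            (hWdiff s y).hasDerivAt
          have hexp : HasDerivAt (fun r : ℝ => Real.exp (r/ε)) (Real.exp (s/ε)/ε) s := by
            have h1 : HasDerivAt (fun r : ℝ => r/ε) (1/ε) s := by
              simpa using (hasDerivAt_id s).div_const ε
            have := (Real.hasDerivAt_exp (s/ε)).comp s h1
            rw [show Real.exp (s/ε)/ε = Real.exp (s/ε) * (1/ε) by ring]; exact this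
          have hHd : HasDerivAt (fun r => H r y)
              (Real.exp (s/ε)/ε * (W s y - u s y)
                + Real.exp (s/ε) * (deriv (fun r => W r y) s - deriv (fun r => u r y) s)) s :=
            hexp.mul (hdW.sub hdu)
          rw [hHd.deriv]
          have hlapH : lap (H s) y
              = Real.exp (s/ε) * (lap (W s) y - lap (u s) y) :=
            lap_comb (Real.exp (s/ε)) (hWC2 s) (hureg s hs0).2 y
          rw [hlapH]
          rw [hupde s hs0 y, hWsol s y]
          -- the delayed comparison
          have htd1 : -(ε*τ) ≤ s - ε*τ := by linarith [hs.1, hT₀nn]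
          have htd2 : s - ε*τ ≤ (k:ℝ)*(ε*τ) := by
            have := hs.2; rw [hT₁] at this; linarith
          have hud : u (s - ε*τ) y ∈ Icc (0:ℝ) 1 := hurange _ htd1 y
          have hWd : W (s - ε*τ) y ∈ Icc (0:ℝ) 1 := hWrange _ y
          have hle : u (s - ε*τ) y ≤ W (s - ε*τ) y := ih _ ⟨htd1, htd2⟩ y
          have hfd : f (u (s - ε*τ) y) ≤ f (W (s - ε*τ) y) := hmono hud hWd hle
          have hexppos : 0 < Real.exp (s/ε) := Real.exp_pos _
          have hfactor : 0 ≤ Real.exp (s/ε) / ε * (f (W (s - ε*τ) y) - f (u (s - ε*τ) y)) := by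
            apply mul_nonneg (by positivity) (by linarith)
          have heq : Real.exp (s/ε)/ε * (W s y - u s y)
              + Real.exp (s/ε) * ((ε*lap (W s) y + 1/ε*(f (W (s - ε*τ) y) - W s y))
                - (ε*lap (u s) y + 1/ε*(f (u (s - ε*τ) y) - u s y)))
              - ε * (Real.exp (s/ε) * (lap (W s) y - lap (u s) y))
              = Real.exp (s/ε)/ε * (f (W (s - ε*τ) y) - f (u (s - ε*τ) y)) := by
            field_simp
            ring
          linarith [hfactor, heq]
        have hinit' : ∀ y, 0 ≤ H T₀ y := by
          intro y
          have h1 : u T₀ y ≤ W T₀ y := ih T₀ ⟨by linarith, le_rfl⟩ y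
          have h2 : 0 < Real.exp (T₀/ε) := Real.exp_pos _
          have : H T₀ y = Real.exp (T₀/ε) * (W T₀ y - u T₀ y) := rfl
          rw [this]; nlinarith
        have hmp := min_principle hε hT hcont hbdd hreg hineq hinit'
        have hHt := hmp t ⟨le_of_lt hcase, htT₁⟩ x
        have hHtval : H t x = Real.exp (t/ε) * (W t x - u t x) := rfl
        rw [hHtval] at hHt
        nlinarith [Real.exp_pos (t/ε), hHt]
  intro t ht x
  obtain ⟨k, hk⟩ := exists_nat_ge (t/(ε*τ))
  have : t ≤ (k:ℝ)*(ε*τ) := by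
    rw [div_le_iff₀ hετ] at hk
    linarith [hk]
  exact key k t ⟨ht, this⟩ x

lemma monostable_monotoneOn {f : ℝ → ℝ} (hf : Monostable f) :
    MonotoneOn f (Icc (0:ℝ) 1) := by
  have hcont : ContinuousOn f (Icc 0 1) :=
    (hf.smooth.continuousOn).mono (Icc_subset_Ici_self)
  have hsm : StrictMonoOn f (Icc (0:ℝ) 1) := by
    apply strictMonoOn_of_deriv_pos (convex_Icc 0 1) hcont
    intro x hx
    rw [interior_Icc] at hx
    have hmem : Ici (0:ℝ) ∈ 𝓝 x := Ici_mem_nhds hx.1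
    have hd : derivWithin f (Ici 0) x = deriv f x := derivWithin_of_mem_nhds hmem
    rw [← hd]
    exact hf.derivPos x hx
  exact hsm.monotoneOn

/-- Convergence to a propagating interface, part (ii): outside the interface
moving with any normal speed `c > c*`, the solution of the scaled delayed
reaction–diffusion equation converges to `0` uniformly for `t ≥ t₀`. -/
theorem stmt_19 {N : ℕ} (hN : 1 ≤ N) (τ : ℝ) (hτ : 0 < τ)
    (f : ℝ → ℝ) (hf : Monostable f)
    (cstar : ℝ) (hcstar : 0 < cstar)
    (hchar : ∀ c > (0:ℝ), (∃ U, MonoWave f τ U c) ↔ cstar ≤ c)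
    (φ : ℝ → EuclideanSpace ℝ (Fin N) → ℝ)
    (hφuc : UniformContinuousOn (fun p : ℝ × EuclideanSpace ℝ (Fin N) => φ p.1 p.2)
      (Icc (-τ) 0 ×ˢ univ))
    (hφr : ∀ θ ∈ Icc (-τ) 0, ∀ x, φ θ x ∈ Icc (0:ℝ) 1)
    (w0 : EuclideanSpace ℝ (Fin N) → ℝ) (hw0sm : ContDiff ℝ 2 w0)
    (hw0bdd : ∃ M, ∀ x, |w0 x| + ‖fderiv ℝ w0 x‖ + ‖iteratedFDeriv ℝ 2 w0 x‖ ≤ M)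
    (hw0uc1 : UniformContinuous fun x => fderiv ℝ w0 x)
    (hw0uc2 : UniformContinuous fun x => iteratedFDeriv ℝ 2 w0 x)
    (hΩne : {x : EuclideanSpace ℝ (Fin N) | 0 < w0 x}.Nonempty)
    (hΩbdd : Bornology.IsBounded {x : EuclideanSpace ℝ (Fin N) | 0 < w0 x})
    (hΩconv : Convex ℝ {x : EuclideanSpace ℝ (Fin N) | 0 < w0 x})
    (hw0φ : ∀ θ ∈ Icc (-τ) 0, ∀ x, w0 x ≤ φ θ x)
    (δ : ℝ) (hδ : 0 < δ)
    (hgrad : ∀ x ∈ frontier {x : EuclideanSpace ℝ (Fin N) | 0 < w0 x},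
      δ ≤ ‖gradient w0 x‖)
    (v0 : EuclideanSpace ℝ (Fin N) → ℝ) (hv0uc : UniformContinuous v0)
    (hv0r : ∀ x, v0 x ∈ Ico (0:ℝ) 1)
    (hv0supp : closure (Function.support v0)
      = closure {x : EuclideanSpace ℝ (Fin N) | 0 < w0 x})
    (hφv0 : ∀ θ ∈ Icc (-τ) 0, ∀ x, φ θ x ≤ v0 x) :
    ∀ c > cstar, ∀ t₀ > (0:ℝ), ∀ ρ > (0:ℝ), ∃ ε₀ ∈ Ioo (0:ℝ) 1,
      ∀ ε ∈ Ioo (0:ℝ) ε₀, ∀ u, IsRDSol f τ ε φ u → ∀ t ≥ t₀,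
      ∀ x : EuclideanSpace ℝ (Fin N),
        x ∉ ({y : EuclideanSpace ℝ (Fin N) | 0 < w0 y}
          ∪ {x : EuclideanSpace ℝ (Fin N) |
              infDist x {y : EuclideanSpace ℝ (Fin N) | 0 < w0 y} < c * t}) →
        u t x ≤ ρ := by
  intro c hc t₀ ht₀ ρ hρ
  set Ω : Set (EuclideanSpace ℝ (Fin N)) := {y | 0 < w0 y} with hΩ
  set clΩ : Set (EuclideanSpace ℝ (Fin N)) := closure Ω with hclΩ
  -- the maximum of v0
  have hclΩcomp : IsCompact clΩ := hΩbdd.isCompact_closure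
  have hclΩne : clΩ.Nonempty := hΩne.closure
  obtain ⟨xb, hxbmem, hxbmax⟩ :=
    hclΩcomp.exists_isMaxOn hclΩne (hv0uc.continuous.continuousOn)
  set ρ₀ : ℝ := v0 xb with hρ₀
  have hρ₀lt : ρ₀ < 1 := (hv0r xb).2
  have hρ₀nn : 0 ≤ ρ₀ := (hv0r xb).1
  have hv0zero : ∀ y, y ∉ clΩ → v0 y = 0 := by
    intro y hy
    by_contra hne
    exact hy (hv0supp ▸ subset_closure (Function.mem_support.mpr hne))
  have hv0glob : ∀ y, v0 y ≤ ρ₀ := by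
    intro y
    by_cases hy : y ∈ clΩ
    · exact hxbmax hy
    · rw [hv0zero y hy]; exact hρ₀nn
  -- the travelling wave with minimal speed
  obtain ⟨U, hUC2, hUrange, hODE, hUbot, hUtop⟩ := (hchar cstar hcstar).mpr le_rfl
  set η : ℝ := (1 - ρ₀)/2 with hη
  have hηpos : 0 < η := by rw [hη]; linarith
  obtain ⟨A, hA⟩ := eventually_atBot.mp
    (hUbot.eventually (eventually_gt_nhds (show 1 - η < 1 by linarith)))
  obtain ⟨B, hB⟩ := eventually_atTop.mp
    (hUtop.eventually (eventually_lt_nhds hρ))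
  set D : ℝ := max (B + cstar*τ - A) 1 with hD
  have hDpos : 0 < D := lt_of_lt_of_le one_pos (le_max_right _ _)
  refine ⟨min (1/2) ((c - cstar)*t₀ / D), ⟨?_, ?_⟩, ?_⟩
  · apply lt_min (by norm_num)
    apply div_pos (mul_pos (by linarith) ht₀) hDpos
  · exact lt_of_le_of_lt (min_le_left _ _) (by norm_num)
  intro ε hεm u hu t ht x hx
  have hε : 0 < ε := hεm.1
  have ht0 : 0 < t := lt_of_lt_of_le ht₀ ht
  -- decode the exclusion of x
  rw [mem_union] at hx
  push_neg at hx
  have hdist : c * t ≤ infDist x Ω := le_of_not_gt hx.2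
  have hct : 0 < c * t := mul_pos (by linarith) ht0
  have hxnot : x ∉ clΩ := by
    intro hmem
    have : infDist x Ω = 0 := infDist_zero_of_mem_closure hmem
    rw [this] at hdist; linarith
  -- projection on the closed convex set clΩ
  have hclΩconv : Convex ℝ clΩ := hΩconv.closure
  have hclΩcl : IsClosed clΩ := isClosed_closure
  obtain ⟨p, hpK, hpnorm⟩ :=
    exists_norm_eq_iInf_of_complete_convex hclΩne hclΩcl.isComplete hclΩconv x
  have hproj : ∀ w ∈ clΩ, (inner ℝ (x - p) (w - p) : ℝ) ≤ 0 :=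
    (norm_eq_iInf_iff_real_inner_le_zero hclΩconv hpK).mp hpnorm
  have hdeq : ‖x - p‖ = infDist x Ω := by
    rw [← infDist_closure (s := Ω), infDist_eq_iInf]
    simp only [dist_eq_norm]
    exact hpnorm
  have hdpos : 0 < ‖x - p‖ := by rw [hdeq]; linarith
  have hxp_ne : x - p ≠ 0 := by
    intro h0; rw [h0, norm_zero] at hdpos; linarith
  set ν : EuclideanSpace ℝ (Fin N) := ‖x - p‖⁻¹ • (x - p) with hν
  have hνnorm : ‖ν‖ = 1 := norm_smul_inv_norm hxp_ne
  set m : ℝ := ε * (cstar*τ - A) with hm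
  set a : ℝ := (inner ℝ ν p : ℝ) + m with ha
  set W : ℝ → EuclideanSpace ℝ (Fin N) → ℝ :=
    fun s y => U ((inner ℝ ν y - a - cstar*s)/ε) with hW
  -- properties of W
  have hWcont : Continuous (fun q : ℝ × EuclideanSpace ℝ (Fin N) => W q.1 q.2) := by
    apply hUC2.continuous.comp
    apply Continuous.div_const
    apply Continuous.sub
    · exact (Continuous.inner continuous_const continuous_snd).sub continuous_const
    · exact continuous_const.mul continuous_fst
  have hWrange : ∀ s y, W s y ∈ Icc (0:ℝ) 1 := fun s y => hUrange _
  have hWdiff : ∀ s y, DifferentiableAt ℝ (fun r => W r y) s := by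
    intro s y
    have h1 : (fun r => W r y)
        = fun r : ℝ => U (((inner ℝ ν y - a)/ε) + (-(cstar/ε)) * r) := by
      funext r
      show U _ = U _
      congr 1
      field_simp
      ring
    rw [h1]
    exact (affine_comp_hasDerivAt (hUC2.differentiable (by norm_num))
      (-(cstar/ε)) ((inner ℝ ν y - a)/ε) s).differentiableAt
  have hWC2 : ∀ s : ℝ, ContDiff ℝ 2 (W s) := by
    intro s
    have h1 : W s = fun y : EuclideanSpace ℝ (Fin N) =>
        U ((inner ℝ ν y - (a + cstar*s))/ε) := by
      funext y
      show U _ = U _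
      congr 1
      rw [sub_sub]
    rw [h1]
    exact planar_contDiff hUC2 ν (a + cstar*s) ε
  have hWsol : ∀ s y, deriv (fun r => W r y) s
      = ε * lap (W s) y + (1/ε) * (f (W (s - ε*τ) y) - W s y) := by
    intro s y
    exact planar_exact_sol hε hUC2 hODE hνnorm a s y
  -- initial comparison
  have hinit : ∀ θ ∈ Icc (-(ε*τ)) 0, ∀ y, u θ y ≤ W θ y := by
    intro θ hθ y
    have hstep : θ/ε ∈ Icc (-τ) 0 := by
      constructor
      · rw [le_div_iff₀ hε]; have := hθ.1; linarith
      · exact div_nonpos_of_nonpos_of_nonneg hθ.2 hε.le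
    have huval : u θ y = φ (θ/ε) y := hu.2.2.1 θ hθ y
    have hWθ : W θ y = U ((inner ℝ ν y - a - cstar*θ)/ε) := rfl
    by_cases hy : y ∈ clΩ
    · -- behind the front : W is close to 1
      have hinner : (inner ℝ ν y : ℝ) ≤ (inner ℝ ν p : ℝ) := by
        have h1 : (inner ℝ ν (y - p) : ℝ) ≤ 0 := by
          rw [hν, real_inner_smul_left]
          apply mul_nonpos_of_nonneg_of_nonpos (by positivity) (hproj y hy)
        have h2 : (inner ℝ ν (y - p) : ℝ) = (inner ℝ ν y : ℝ) - (inner ℝ ν p : ℝ) :=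
          inner_sub_right ν y p
        linarith [h2 ▸ h1]
      have hζle : (inner ℝ ν y - a - cstar*θ)/ε ≤ A := by
        rw [div_le_iff₀ hε]
        have h3 : -(cstar*θ) ≤ cstar*(ε*τ) := by
          have := hθ.1
          nlinarith [hcstar]
        rw [ha, hm]
        nlinarith [hinner]
      have hUζ : 1 - η < U ((inner ℝ ν y - a - cstar*θ)/ε) := hA _ hζle
      have hφle : φ (θ/ε) y ≤ ρ₀ := le_trans (hφv0 _ hstep y) (hv0glob y)
      rw [huval, hWθ]
      have : ρ₀ = 1 - 2*η := by rw [hη]; ring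
      linarith
    · -- ahead of the support : the solution starts from 0
      have hv0y : v0 y = 0 := hv0zero y hy
      have hφle : φ (θ/ε) y ≤ 0 := hv0y ▸ hφv0 _ hstep y
      have hφge : 0 ≤ φ (θ/ε) y := (hφr _ hstep y).1
      rw [huval, hWθ]
      have := (hUrange ((inner ℝ ν y - a - cstar*θ)/ε)).1
      linarith
  -- comparison on all times
  have hcomp := comparison hε hτ (monostable_monotoneOn hf) hu hWcont hWrange
    hWdiff hWC2 hWsol hinit
  have hut : u t x ≤ W t x := hcomp t (by linarith [mul_pos hε hτ]) x
  -- conclude : W t x is small ahead of the front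
  have hinnerx : (inner ℝ ν x : ℝ) - (inner ℝ ν p : ℝ) = ‖x - p‖ := by
    have h2 : (inner ℝ ν (x - p) : ℝ) = (inner ℝ ν x : ℝ) - (inner ℝ ν p : ℝ) :=
      inner_sub_right ν x p
    rw [← h2, hν, real_inner_smul_left, real_inner_self_eq_norm_sq]
    field_simp
  have hεD : ε * D < (c - cstar)*t₀ := by
    have h1 : ε < (c - cstar)*t₀ / D := lt_of_lt_of_le hεm.2 (min_le_right _ _)
    rw [lt_div_iff₀ hDpos] at h1
    exact h1
  have hζB : B ≤ (inner ℝ ν x - a - cstar*t)/ε := by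
    rw [le_div_iff₀ hε]
    have h1 : ε * (B + cstar*τ - A) ≤ ε * D :=
      mul_le_mul_of_nonneg_left (le_max_left _ _) hε.le
    have h2 : (c - cstar)*t₀ ≤ (c - cstar)*t :=
      mul_le_mul_of_nonneg_left ht (by linarith)
    have h3 : c * t ≤ ‖x - p‖ := by rw [hdeq]; exact hdist
    rw [ha, hm]
    nlinarith [hinnerx]
  have hUsmall : U ((inner ℝ ν x - a - cstar*t)/ε) < ρ := hB _ hζB
  have hWt : W t x = U ((inner ℝ ν x - a - cstar*t)/ε) := rfl
  rw [hWt] at hut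
  linarith
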